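/- Let f : ℝ^d → ℝ be continuously differentiable with a nonempty set S of global minimizers, minimal value f⋆ = 0, S̃ = S, and suppose ‖∇f(x)‖ ≤ G for all x ∈ ℝ^d and there exist c₁ > 0, c₂ ≥ 0 such that ⟨∇f(x), x − proj_{S}(x)⟩ ≥ c₁ f(x) − c₂ for all x ∈ ℝ^d. Let x^{k+1} = x^k − γ^k ∇f(x^k) with γ^k = c₁ f(x^k)/‖∇f(x^k)‖². Then for every K ≥ 0: min_{0≤k≤K} f(x^k) ≤ G ‖x^0 − x^0_p‖/(c₁ √(K+1)) + 2c₂/c₁, where x^0_p := proj_{S}(x^0). -/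

import Mathlib

open scoped RealInnerProductSpace

/-- Example 5 (bounded-gradient case): under the relaxed aiming condition
`⟨∇f(x), x − proj_S(x)⟩ ≥ c₁ f(x) − c₂` with `f⋆ = 0`, bounded gradients, and the
Polyak-type stepsize `γᵏ = c₁ f(xᵏ)/‖∇f(xᵏ)‖²`, gradient descent achieves an
`O(1/√K)` rate for the minimum function value up to `2c₂/c₁`. -/
theorem aiming_condition_bounded_gradient_rate
    {d : ℕ} (f : EuclideanSpace ℝ (Fin d) → ℝ)
    (hf : ContDiff ℝ 1 f)
    (S : Set (EuclideanSpace ℝ (Fin d)))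
    (hSne : S.Nonempty)
    (hSmin : ∀ s ∈ S, ∀ y, f s ≤ f y)
    (hfstar : ∀ s ∈ S, f s = 0)
    (proj : EuclideanSpace ℝ (Fin d) → EuclideanSpace ℝ (Fin d))
    (hproj : ∀ y, proj y ∈ S ∧ ∀ z ∈ S, ‖y - proj y‖ ≤ ‖y - z‖)
    (G : ℝ) (hG : ∀ y, ‖gradient f y‖ ≤ G)
    (c₁ c₂ : ℝ) (hc₁ : 0 < c₁) (hc₂ : 0 ≤ c₂)
    (hass : ∀ y, c₁ * f y - c₂ ≤ ⟪gradient f y, y - proj y⟫)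
    (x : ℕ → EuclideanSpace ℝ (Fin d)) (γ : ℕ → ℝ)
    (hupd : ∀ k, x (k + 1) = x k - γ k • gradient f (x k))
    (hγ : ∀ k, γ k = c₁ * f (x k) / ‖gradient f (x k)‖ ^ 2)
    (K : ℕ) :
    (Finset.range (K + 1)).inf' ⟨0, Finset.mem_range.mpr (Nat.succ_pos K)⟩ (fun k => f (x k)) ≤
      G * ‖x 0 - proj (x 0)‖ / (c₁ * Real.sqrt (K + 1)) + 2 * c₂ / c₁ := by
  by_contra hcon
  push_neg at hcon
  set m := (Finset.range (K + 1)).inf' ⟨0, Finset.mem_range.mpr (Nat.succ_pos K)⟩ (fun k => f (x k)) with hm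
  obtain ⟨s, hs⟩ := hSne
  have hf0 : ∀ y, 0 ≤ f y := fun y => (hfstar s hs) ▸ hSmin s hs y
  have hGnn : 0 ≤ G := le_trans (norm_nonneg _) (hG (x 0))
  have hr0 : (0:ℝ) ≤ ‖x 0 - proj (x 0)‖ := norm_nonneg _
  have hK1 : (0:ℝ) < (K:ℝ) + 1 := by positivity
  have hsqrt : 0 < Real.sqrt ((K:ℝ) + 1) := Real.sqrt_pos.2 hK1
  have hmle : ∀ k ∈ Finset.range (K+1), m ≤ f (x k) := fun k hk =>
    Finset.inf'_le _ hk
  have hBnn : 0 ≤ G * ‖x 0 - proj (x 0)‖ / (c₁ * Real.sqrt ((K:ℝ) + 1)) :=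
    div_nonneg (mul_nonneg hGnn hr0) (mul_nonneg hc₁.le hsqrt.le)
  -- the gradient is nonzero along the trajectory up to K
  have hgne : ∀ k ∈ Finset.range (K+1), gradient f (x k) ≠ 0 := by
    intro k hk hg0
    have h1 := hass (x k)
    rw [hg0, inner_zero_left] at h1
    have h2 : f (x k) ≤ c₂ / c₁ := by
      rw [le_div_iff₀ hc₁]; linarith
    have h3 : m ≤ c₂ / c₁ := le_trans (hmle k hk) h2
    have h4 : c₂ / c₁ ≤ 2 * c₂ / c₁ := by gcongr; linarith
    linarith
  have hG0 : 0 < G :=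
    lt_of_lt_of_le (norm_pos_iff.2 (hgne 0 (Finset.mem_range.2 (Nat.succ_pos K)))) (hG (x 0))
  set A := c₁ * m - 2 * c₂ with hA
  have hBA : G * ‖x 0 - proj (x 0)‖ / Real.sqrt ((K:ℝ) + 1) < A := by
    have h6 : G * ‖x 0 - proj (x 0)‖ / (c₁ * Real.sqrt ((K:ℝ) + 1))
        = (G * ‖x 0 - proj (x 0)‖ / Real.sqrt ((K:ℝ) + 1)) / c₁ := by
      rw [div_div, mul_comm c₁]
    rw [h6, ← add_div, div_lt_iff₀ hc₁] at hcon
    simp only [hA]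
    linarith [hcon]
  have hBnn' : 0 ≤ G * ‖x 0 - proj (x 0)‖ / Real.sqrt ((K:ℝ) + 1) :=
    div_nonneg (mul_nonneg hGnn hr0) hsqrt.le
  have hApos : 0 < A := lt_of_le_of_lt hBnn' hBA
  -- per-step decrease
  have step : ∀ k ∈ Finset.range (K+1),
      ‖x (k+1) - proj (x (k+1))‖^2 ≤ ‖x k - proj (x k)‖^2 - A^2 / G^2 := by
    intro k hk
    set g := gradient f (x k) with hg
    set p := proj (x k) with hp
    have hng : g ≠ 0 := hgne k hk
    have hngpos : (0:ℝ) < ‖g‖ := norm_pos_iff.2 hng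
    have hng2 : (0:ℝ) < ‖g‖^2 := by positivity
    have hngG : ‖g‖ ≤ G := hG (x k)
    have hfk : 0 ≤ f (x k) := hf0 (x k)
    have hmk : m ≤ f (x k) := hmle k hk
    have hsub : x (k+1) - p = (x k - p) - γ k • g := by
      rw [hupd k]; abel
    have hexp : ‖x (k+1) - p‖^2
        = ‖x k - p‖^2 - 2 * (γ k * ⟪g, x k - p⟫) + (γ k)^2 * ‖g‖^2 := by
      rw [hsub, norm_sub_sq_real, real_inner_smul_right, real_inner_comm, norm_smul]
      rw [mul_pow, Real.norm_eq_abs, sq_abs]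
    have haim : c₁ * f (x k) - c₂ ≤ ⟪g, x k - p⟫ := hass (x k)
    set q := c₁ * f (x k) / ‖g‖^2 with hqdef
    have hγval : γ k = q := hγ k
    have hqnn : 0 ≤ q := by positivity
    have hqg : q * ‖g‖^2 = c₁ * f (x k) := div_mul_cancel₀ _ (ne_of_gt hng2)
    have hge : ‖x (k+1) - p‖^2
        ≤ ‖x k - p‖^2 - q * (c₁ * f (x k) - 2 * c₂) := by
      have h1 : (γ k)^2 * ‖g‖^2 = q * (c₁ * f (x k)) := by
        rw [hγval, pow_two, mul_assoc, hqg]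
      rw [hexp, h1, hγval]
      have h2 : q * (c₁ * f (x k) - c₂) ≤ q * ⟪g, x k - p⟫ :=
        mul_le_mul_of_nonneg_left haim hqnn
      linarith [h2]
    have hAle : A ≤ c₁ * f (x k) - 2 * c₂ := by
      simp only [hA]
      have := mul_le_mul_of_nonneg_left hmk hc₁.le
      linarith
    have hAle2 : A ≤ c₁ * f (x k) := by linarith
    have hdec : A^2 / G^2 ≤ q * (c₁ * f (x k) - 2 * c₂) := by
      have h4 : q * (c₁ * f (x k) - 2 * c₂)
          = (c₁ * f (x k) * (c₁ * f (x k) - 2 * c₂)) / ‖g‖^2 :=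
        div_mul_eq_mul_div _ _ _
      rw [h4]
      have hcf : 0 ≤ c₁ * f (x k) := by linarith
      have hcf2 : 0 ≤ c₁ * f (x k) - 2 * c₂ := by linarith
      have hnum : A^2 ≤ c₁ * f (x k) * (c₁ * f (x k) - 2 * c₂) := by
        rw [pow_two]
        exact mul_le_mul hAle2 hAle hApos.le hcf
      have hden : ‖g‖^2 ≤ G^2 := pow_le_pow_left₀ hngpos.le hngG 2
      exact div_le_div₀ (mul_nonneg hcf hcf2) hnum hng2 hden
    have hfinal : ‖x (k+1) - proj (x (k+1))‖ ≤ ‖x (k+1) - p‖ :=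
      (hproj (x (k+1))).2 p (hproj (x k)).1
    have hsq : ‖x (k+1) - proj (x (k+1))‖^2 ≤ ‖x (k+1) - p‖^2 :=
      pow_le_pow_left₀ (norm_nonneg _) hfinal 2
    linarith
  -- sum up
  have ind : ∀ k, k ≤ K + 1 →
      ‖x k - proj (x k)‖^2 ≤ ‖x 0 - proj (x 0)‖^2 - k * (A^2 / G^2) := by
    intro k
    induction k with
    | zero => intro _; simp
    | succ n ih =>
      intro hn
      have hn' : n ≤ K + 1 := Nat.le_of_succ_le hn
      have hnK : n ∈ Finset.range (K+1) := Finset.mem_range.2 (Nat.lt_of_succ_le hn)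
      have h1 := step n hnK
      have h2 := ih hn'
      push_cast
      have h3 : ((n:ℝ)+1) * (A^2/G^2) = (n:ℝ) * (A^2/G^2) + A^2/G^2 := by ring
      linarith
  have hfin := ind (K+1) (le_refl _)
  have hnn : (0:ℝ) ≤ ‖x (K+1) - proj (x (K+1))‖^2 := sq_nonneg _
  push_cast at hfin
  have hkey : ((K:ℝ)+1) * (A^2 / G^2) ≤ ‖x 0 - proj (x 0)‖^2 := by linarith
  have hkey2 : ((K:ℝ)+1) * A^2 ≤ ‖x 0 - proj (x 0)‖^2 * G^2 := by
    have h5 : ((K:ℝ)+1) * A^2 = (((K:ℝ)+1) * (A^2/G^2)) * G^2 := by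
      field_simp
    rw [h5]
    exact mul_le_mul_of_nonneg_right hkey (sq_nonneg G)
  have hsq : (Real.sqrt ((K:ℝ)+1))^2 = (K:ℝ)+1 := Real.sq_sqrt hK1.le
  rw [div_lt_iff₀ hsqrt] at hBA
  have hsq2 : (G * ‖x 0 - proj (x 0)‖) * (G * ‖x 0 - proj (x 0)‖)
      < (A * Real.sqrt ((K:ℝ)+1)) * (A * Real.sqrt ((K:ℝ)+1)) :=
    mul_self_lt_mul_self (mul_nonneg hGnn hr0) hBA
  nlinarith [hkey2, hsq2, hsq]
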